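/- Let l ≥ 1 be an integer, let L ∈ ℝ^{l×l} be symmetric positive definite, let β > 0 and p ∈ (1,2), and define B(e) = ((eᵀLe)^{1−1/p} − β)/((eᵀLe)^{1−1/p} + β) for e ∈ ℝ^l. Let (e_k)_{k∈ℕ} in ℝ^l satisfy e_{k+1} = B(e_k)·e_k, and set V_k := (1/2)·e_kᵀ L e_k. Then for every k ∈ ℕ: V_{k+1} − V_k = −γ(V_k)·V_k^{1/p}, where γ(V) := 4β·2^{1−1/p}·V^{2−2/p} / ((2V)^{1−1/p} + β)² for V > 0 and γ(0) := 0. -/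

import Mathlib

open Matrix

/-- The observer gain function B of Theorem 1. -/
noncomputable def Bfun (l : ℕ) (L : Matrix (Fin l) (Fin l) ℝ) (β p : ℝ)
    (e : Fin l → ℝ) : ℝ :=
  ((e ⬝ᵥ L.mulVec e) ^ (1 - 1 / p) - β) / ((e ⬝ᵥ L.mulVec e) ^ (1 - 1 / p) + β)

/-- The Lyapunov-difference gain γ of eqs. (24)-(25). -/
noncomputable def gamFun (β p V : ℝ) : ℝ :=
  if V = 0 then 0
  else 4 * β * (2:ℝ) ^ (1 - 1 / p) * V ^ (2 - 2 / p) / ((2 * V) ^ (1 - 1 / p) + β) ^ 2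

/-- Exact Lyapunov difference identity (eqs. (24)-(25)) for the observer recursion. -/
theorem stmt_4 (l : ℕ) (hl : 1 ≤ l) (L : Matrix (Fin l) (Fin l) ℝ)
    (hLsymm : L.IsSymm) (hL : L.PosDef)
    (β p : ℝ) (hβ : 0 < β) (hp : p ∈ Set.Ioo (1:ℝ) 2)
    (e : ℕ → Fin l → ℝ)
    (hrec : ∀ k, e (k + 1) = Bfun l L β p (e k) • e k)
    (V : ℕ → ℝ) (hV : ∀ k, V k = (1/2) * (e k ⬝ᵥ L.mulVec (e k))) :
    ∀ k, V (k + 1) - V k = -(gamFun β p (V k)) * (V k) ^ ((1:ℝ) / p) := by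
  intro k
  obtain ⟨hp1, hp2⟩ := hp
  have hp0 : (0:ℝ) < p := by linarith
  set Q : ℝ := e k ⬝ᵥ L.mulVec (e k) with hQdef
  set b : ℝ := Bfun l L β p (e k) with hbdef
  have hQ1 : e (k+1) ⬝ᵥ L.mulVec (e (k+1)) = b * (b * Q) := by
    rw [hrec k]
    simp [Matrix.mulVec_smul, dotProduct_smul, smul_dotProduct,
      smul_eq_mul, hQdef, hbdef, mul_assoc]
  have hQnn : 0 ≤ Q := by
    by_cases h : e k = 0
    · simp [hQdef, h]
    · exact le_of_lt (by simpa using hL.dotProduct_mulVec_pos h)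
  rcases eq_or_lt_of_le hQnn with hQ0 | hQpos
  · -- Q = 0 case: e k = 0
    have he0 : e k = 0 := by
      by_contra h
      exact absurd hQ0.symm (ne_of_gt (by simpa using hL.dotProduct_mulVec_pos h))
    have hVk : V k = 0 := by simp [hV k, hQdef, he0, ← hQ0]
    have hVk1 : V (k+1) = 0 := by
      simp [hV (k+1), hQ1, ← hQ0]
    simp [hVk, hVk1, gamFun]
  · -- Q > 0 case
    have hVk : V k = Q / 2 := by rw [hV k]; ring
    have hVkpos : 0 < V k := by rw [hVk]; positivity
    have hVkne : V k ≠ 0 := ne_of_gt hVkpos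
    set a : ℝ := 1 - 1/p with ha
    set A : ℝ := Q ^ a with hA
    have hApos : 0 < A := Real.rpow_pos_of_pos hQpos a
    have hD : A + β ≠ 0 := by positivity
    have h2V : 2 * V k = Q := by rw [hVk]; ring
    have hbval : b = (A - β) / (A + β) := rfl
    have hgam : gamFun β p (V k)
        = 4 * β * (2:ℝ) ^ a * (V k) ^ (2 - 2/p) / (A + β) ^ 2 := by
      rw [gamFun, if_neg hVkne, h2V]
    -- key rpow identity: 4 * 2^a * (V k)^(2-2/p) * (V k)^(1/p) = 2 * A * Q
    have hkey : 4 * (2:ℝ) ^ a * (V k) ^ (2 - 2/p) * (V k) ^ ((1:ℝ)/p)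
        = 2 * A * Q := by
      have h1 : (V k) ^ (2 - 2/p) * (V k) ^ ((1:ℝ)/p) = (V k) ^ (2 - 1/p) := by
        rw [← Real.rpow_add hVkpos]; ring_nf
      have h2 : (V k) ^ (2 - 1/p) = Q ^ (2 - 1/p) / (2:ℝ) ^ (2 - 1/p) := by
        rw [hVk, Real.div_rpow (le_of_lt hQpos) (by norm_num)]
      have h3 : Q ^ (2 - 1/p) = A * Q := by
        rw [hA, show (2 - 1/p) = a + 1 by rw [ha]; ring, Real.rpow_add hQpos,
          Real.rpow_one]
      have h4 : (2:ℝ) ^ a / (2:ℝ) ^ (2 - 1/p) = 1 / 2 := by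
        rw [← Real.rpow_sub (by norm_num : (0:ℝ) < 2)]
        rw [show a - (2 - 1/p) = -1 by rw [ha]; ring, Real.rpow_neg_one]
        norm_num
      calc 4 * (2:ℝ) ^ a * (V k) ^ (2 - 2/p) * (V k) ^ ((1:ℝ)/p)
          = 4 * (2:ℝ) ^ a * ((V k) ^ (2 - 2/p) * (V k) ^ ((1:ℝ)/p)) := by ring
        _ = 4 * ((2:ℝ) ^ a / (2:ℝ) ^ (2 - 1/p)) * (Q ^ (2 - 1/p)) := by
            rw [h1, h2]; ring
        _ = 2 * A * Q := by rw [h4, h3]; ring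
    have hLHS : V (k+1) - V k = (b * b - 1) * V k := by
      rw [hV (k+1), hQ1, hVk]; ring
    rw [hLHS, hgam, hbval, hVk]
    have h2 : ((A - β)/(A + β)) * ((A - β)/(A + β)) - 1
        = -(4 * A * β) / (A + β)^2 := by
      field_simp; ring
    rw [h2]
    rw [hVk] at hkey
    linear_combination (β/((A+β)^2)) * hkey
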